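/- Let (X, ‖·‖, ≼) be a regular partially ordered Banach space and D a nonempty closed bi-inductive subset of X. Let F : D → D be an ≼-increasing demi-continuous mapping and suppose there is a point x₀ ∈ D with x₀ ≼ F x₀. Then the fixed point set 𝔉(F) = {x ∈ D : F x = x} is a nonempty bi-chain-complete subset of D, and F has both an ≼-maximal and an ≼-minimal fixed point. (Theorem 4.1 (b), (b')) -/

import Mathlib

/-- The partial order on a Banach space induced by a cone `K`: `x ≼ y` iff `y - x ∈ K`. -/
def coneLe {X : Type*} [NormedAddCommGroup X] (K : Set X) (x y : X) : Prop := y - x ∈ K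

open Filter Topology

set_option linter.unusedSectionVars false
section helpers
variable {X : Type*} [NormedAddCommGroup X] [NormedSpace ℝ X] [CompleteSpace X] (K : Set X)

lemma coneLe_refl (hK0 : (0:X) ∈ K) (x : X) : coneLe K x x := by simpa [coneLe] using hK0

lemma coneLe_trans (hKadd : ∀ x ∈ K, ∀ y ∈ K, x + y ∈ K) {a b c : X}
    (h1 : coneLe K a b) (h2 : coneLe K b c) : coneLe K a c := by
  have := hKadd _ h1 _ h2
  simpa [coneLe, sub_add_sub_cancel'] using this

lemma coneLe_of_tendsto (hKclosed : IsClosed K) {u : ℕ → X} {p y : X}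
    (hu : Tendsto u atTop (nhds p)) (h : ∀ n, coneLe K (u n) y) : coneLe K p y := by
  have : Tendsto (fun n => y - u n) atTop (nhds (y - p)) := tendsto_const_nhds.sub hu
  exact hKclosed.mem_of_tendsto this (Filter.Eventually.of_forall h)

lemma coneLe_of_tendsto' (hKclosed : IsClosed K) {u : ℕ → X} {p y : X}
    (hu : Tendsto u atTop (nhds p)) (h : ∀ n, coneLe K y (u n)) : coneLe K y p := by
  have : Tendsto (fun n => u n - y) atTop (nhds (p - y)) := hu.sub tendsto_const_nhds
  exact hKclosed.mem_of_tendsto this (Filter.Eventually.of_forall h)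

-- regularity for decreasing sequences bounded below
lemma reg_neg
    (hreg : ∀ u : ℕ → X, (∀ n, coneLe K (u n) (u (n + 1))) →
      (∃ b, ∀ n, coneLe K (u n) b) → ∃ p, Tendsto u atTop (nhds p))
    (u : ℕ → X) (hdec : ∀ n, coneLe K (u (n+1)) (u n))
    (hbd : ∃ a, ∀ n, coneLe K a (u n)) : ∃ p, Tendsto u atTop (nhds p) := by
  obtain ⟨a, ha⟩ := hbd
  obtain ⟨q, hq⟩ := hreg (fun n => -(u n))
    (fun n => by show -u (n+1) - -u n ∈ K; rw [neg_sub_neg]; exact hdec n)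
    ⟨-a, fun n => by show -a - -u n ∈ K; rw [neg_sub_neg]; exact ha n⟩
  exact ⟨-q, by simpa using hq.neg⟩
end helpers

section main
variable {X : Type*} [NormedAddCommGroup X] [NormedSpace ℝ X] [CompleteSpace X] (K : Set X)

lemma chain_subseq_tendsto (hKclosed : IsClosed K) (hK0 : (0:X) ∈ K)
    (hreg : ∀ u : ℕ → X, (∀ n, coneLe K (u n) (u (n + 1))) →
      (∃ b, ∀ n, coneLe K (u n) b) → ∃ p, Tendsto u atTop (nhds p))
    {C : Set X} (hchain : IsChain (coneLe K) C)
    {b a : X} (hb : ∀ c ∈ C, coneLe K c b) (ha : ∀ c ∈ C, coneLe K a c)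
    (x : ℕ → X) (hx : ∀ n, x n ∈ C) :
    ∃ p, ∃ g : ℕ → ℕ, StrictMono g ∧ Tendsto (x ∘ g) atTop (nhds p) := by
  obtain ⟨g, hg⟩ := exists_increasing_or_nonincreasing_subseq' (coneLe K) x
  rcases hg with hinc | hdec
  · obtain ⟨p, hp⟩ := hreg (fun n => x (g n)) hinc ⟨b, fun n => hb _ (hx _)⟩
    exact ⟨p, g, g.strictMono, hp⟩
  · have hdec' : ∀ m n : ℕ, m < n → coneLe K (x (g n)) (x (g m)) := by
      intro m n hmn
      by_cases he : x (g m) = x (g n)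
      · exact absurd (he ▸ coneLe_refl K hK0 (x (g m))) (hdec m n hmn)
      · rcases hchain (hx (g m)) (hx (g n)) he with h | h
        · exact absurd h (hdec m n hmn)
        · exact h
    obtain ⟨p, hp⟩ := reg_neg K hreg (fun n => x (g n))
      (fun n => hdec' n (n+1) (Nat.lt_succ_self n)) ⟨a, fun n => ha _ (hx _)⟩
    exact ⟨p, g, g.strictMono, hp⟩

lemma chain_closure_compact (hKclosed : IsClosed K) (hK0 : (0:X) ∈ K)
    (hreg : ∀ u : ℕ → X, (∀ n, coneLe K (u n) (u (n + 1))) →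
      (∃ b, ∀ n, coneLe K (u n) b) → ∃ p, Tendsto u atTop (nhds p))
    {C : Set X} (hchain : IsChain (coneLe K) C)
    {b a : X} (hb : ∀ c ∈ C, coneLe K c b) (ha : ∀ c ∈ C, coneLe K a c) :
    IsCompact (closure C) := by
  refine IsSeqCompact.isCompact ?_
  intro y hy
  have hsel : ∀ n : ℕ, ∃ z ∈ C, dist (y n) z < 1/(n+1) := by
    intro n
    have := Metric.mem_closure_iff.1 (hy n) (1/(n+1)) (by positivity)
    simpa using this
  choose z hzC hzd using hsel
  obtain ⟨p, g, hgmono, hgt⟩ := chain_subseq_tendsto K hKclosed hK0 hreg hchain hb ha z hzC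
  refine ⟨p, ?_, g, hgmono, ?_⟩
  · exact mem_closure_of_tendsto hgt (Filter.Eventually.of_forall fun n => hzC _)
  · refine hgt.congr_dist (squeeze_zero (fun n => dist_nonneg) (fun n => ?_)
      tendsto_one_div_add_atTop_nhds_zero_nat)
    have hgle : (n:ℝ) + 1 ≤ (g n : ℝ) + 1 := by
      have : n ≤ g n := hgmono.le_apply
      have := (Nat.cast_le (α := ℝ)).2 this; linarith
    calc dist ((z ∘ g) n) ((y ∘ g) n) ≤ 1/((g n : ℝ)+1) := by
          rw [dist_comm]; exact le_of_lt (hzd _)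
      _ ≤ 1/((n:ℝ)+1) := by
          apply one_div_le_one_div_of_le (by positivity) hgle
end main

lemma finset_chain_bound {α : Type*} (r : α → α → Prop)
    (htot : ∀ a b, r a b ∨ r b a)
    (htrans : ∀ {a b c}, r a b → r b c → r a c) :
    ∀ t : Finset α, t.Nonempty → ∃ m ∈ t, ∀ c ∈ t, r c m := by
  classical
  intro t
  induction t using Finset.induction_on with
  | empty => intro h; exact absurd h (by simp)
  | @insert x s hx ih =>
    intro _
    by_cases hs : s.Nonempty
    · obtain ⟨m, hmt, hm⟩ := ih hs
      rcases htot x m with h | h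
      · exact ⟨m, Finset.mem_insert_of_mem hmt, fun c hc => by
          rcases Finset.mem_insert.1 hc with rfl | hc
          · exact h
          · exact hm c hc⟩
      · refine ⟨x, Finset.mem_insert_self x s, fun c hc => ?_⟩
        rcases Finset.mem_insert.1 hc with rfl | hc
        · rcases htot c c with h' | h' <;> exact h'
        · exact htrans (hm c hc) h
    · rw [Finset.not_nonempty_iff_eq_empty] at hs
      subst hs
      refine ⟨x, Finset.mem_insert_self x ∅, fun c hc => ?_⟩
      rcases Finset.mem_insert.1 hc with rfl | hc
      · rcases htot c c with h' | h' <;> exact h'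
      · simp at hc

section sup
variable {X : Type*} [NormedAddCommGroup X] [NormedSpace ℝ X] [CompleteSpace X] (K : Set X)

lemma sup_fixed_chain (hKclosed : IsClosed K) (hK0 : (0:X) ∈ K)
    (hKadd : ∀ x ∈ K, ∀ y ∈ K, x + y ∈ K)
    (hreg : ∀ u : ℕ → X, (∀ n, coneLe K (u n) (u (n + 1))) →
      (∃ b, ∀ n, coneLe K (u n) b) → ∃ p, Tendsto u atTop (nhds p))
    (D : Set X) (hDclosed : IsClosed D) (F : X → X)
    (hFdemi : ∀ (u : ℕ → X), (∀ n, u n ∈ D) → ∀ p ∈ D,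
      Tendsto u atTop (nhds p) →
      ∀ f : X →L[ℝ] ℝ, Tendsto (fun n => f (F (u n))) atTop (nhds (f (F p))))
    (C : Set X) (hCD : C ⊆ D) (hCfix : ∀ c ∈ C, F c = c) (hCne : C.Nonempty)
    (hchain : IsChain (coneLe K) C) (b : X) (hb : ∀ c ∈ C, coneLe K c b)
    (a : X) (ha : ∀ c ∈ C, coneLe K a c) :
    ∃ s, s ∈ D ∧ F s = s ∧ (∀ c ∈ C, coneLe K c s) ∧
      ∀ b', (∀ c ∈ C, coneLe K c b') → coneLe K s b' := by
  have htot : ∀ x : C, ∀ y : C, coneLe K (x:X) (y:X) ∨ coneLe K (y:X) (x:X) := by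
    intro x y
    by_cases he : (x:X) = (y:X)
    · exact Or.inl (he ▸ coneLe_refl K hK0 (x:X))
    · exact hchain x.2 y.2 he
  have hcomp := chain_closure_compact K hKclosed hK0 hreg hchain hb ha
  set Z : C → Set X := fun c => {x | coneLe K (c:X) x} with hZ
  have hZc : ∀ c : C, IsClosed (Z c) := by
    intro c
    have : Z c = (fun x => x - (c:X)) ⁻¹' K := rfl
    rw [this]
    exact hKclosed.preimage (continuous_id.sub continuous_const)
  have hfin : ∀ t : Finset C, (closure C ∩ ⋂ c ∈ t, Z c).Nonempty := by
    intro t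
    by_cases hte : t.Nonempty
    · obtain ⟨m, hmt, hm⟩ := finset_chain_bound (fun x y : C => coneLe K (x:X) (y:X))
        (fun x y => htot x y) (fun h1 h2 => coneLe_trans K hKadd h1 h2) t hte
      refine ⟨(m:X), subset_closure m.2, ?_⟩
      simp only [Set.mem_iInter]
      intro c hc
      exact hm c hc
    · rw [Finset.not_nonempty_iff_eq_empty] at hte
      subst hte
      simpa using hCne.closure
  obtain ⟨p, hpcl, hpZ⟩ := hcomp.inter_iInter_nonempty Z hZc hfin
  have hub : ∀ c ∈ C, coneLe K c p := by
    intro c hc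
    have := Set.mem_iInter.1 hpZ ⟨c, hc⟩
    exact this
  obtain ⟨u, hu, hul⟩ := mem_closure_iff_seq_limit.1 hpcl
  have hpD : p ∈ D := closure_minimal hCD hDclosed hpcl
  have hfix : F p = p := by
    rw [NormedSpace.eq_iff_forall_dual_eq ℝ]
    intro f
    have h1 : Tendsto (fun n => f (F (u n))) atTop (nhds (f (F p))) :=
      hFdemi u (fun n => hCD (hu n)) p hpD hul f
    have h2 : Tendsto (fun n => f (u n)) atTop (nhds (f p)) :=
      (f.continuous.tendsto p).comp hul
    have h3 : Tendsto (fun n => f (u n)) atTop (nhds (f (F p))) := by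
      refine h1.congr fun n => ?_
      rw [hCfix _ (hu n)]
    exact tendsto_nhds_unique h3 h2
  refine ⟨p, hpD, hfix, hub, fun b' hb' => ?_⟩
  exact coneLe_of_tendsto K hKclosed hul (fun n => hb' _ (hu n))
end sup

section inf
variable {X : Type*} [NormedAddCommGroup X] [NormedSpace ℝ X] [CompleteSpace X] (K : Set X)

lemma coneLe_neg_iff (x y : X) : coneLe (Neg.neg ⁻¹' K) x y ↔ coneLe K y x := by
  simp [coneLe, neg_sub]

lemma inf_fixed_chain (hKclosed : IsClosed K) (hK0 : (0:X) ∈ K)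
    (hKadd : ∀ x ∈ K, ∀ y ∈ K, x + y ∈ K)
    (hreg : ∀ u : ℕ → X, (∀ n, coneLe K (u n) (u (n + 1))) →
      (∃ b, ∀ n, coneLe K (u n) b) → ∃ p, Tendsto u atTop (nhds p))
    (D : Set X) (hDclosed : IsClosed D) (F : X → X)
    (hFdemi : ∀ (u : ℕ → X), (∀ n, u n ∈ D) → ∀ p ∈ D,
      Tendsto u atTop (nhds p) →
      ∀ f : X →L[ℝ] ℝ, Tendsto (fun n => f (F (u n))) atTop (nhds (f (F p))))
    (C : Set X) (hCD : C ⊆ D) (hCfix : ∀ c ∈ C, F c = c) (hCne : C.Nonempty)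
    (hchain : IsChain (coneLe K) C) (b : X) (hb : ∀ c ∈ C, coneLe K c b)
    (a : X) (ha : ∀ c ∈ C, coneLe K a c) :
    ∃ s, s ∈ D ∧ F s = s ∧ (∀ c ∈ C, coneLe K s c) ∧
      ∀ a', (∀ c ∈ C, coneLe K a' c) → coneLe K a' s := by
  set K' : Set X := Neg.neg ⁻¹' K with hK'
  have hK'closed : IsClosed K' := hKclosed.preimage continuous_neg
  have hK'0 : (0:X) ∈ K' := by simpa [hK'] using hK0
  have hK'add : ∀ x ∈ K', ∀ y ∈ K', x + y ∈ K' := by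
    intro x hx y hy
    simp only [hK', Set.mem_preimage, neg_add] at *
    exact hKadd _ hx _ hy
  have hK'reg : ∀ u : ℕ → X, (∀ n, coneLe K' (u n) (u (n + 1))) →
      (∃ b, ∀ n, coneLe K' (u n) b) → ∃ p, Tendsto u atTop (nhds p) := by
    intro u hinc ⟨b', hb'⟩
    refine reg_neg K hreg u (fun n => ?_) ⟨b', fun n => ?_⟩
    · exact (coneLe_neg_iff K _ _).1 (hinc n)
    · exact (coneLe_neg_iff K _ _).1 (hb' n)
  have hchain' : IsChain (coneLe K') C := by
    intro x hx y hy hxy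
    rcases hchain hx hy hxy with h | h
    · exact Or.inr ((coneLe_neg_iff K _ _).2 h)
    · exact Or.inl ((coneLe_neg_iff K _ _).2 h)
  obtain ⟨s, h1, h2, h3, h4⟩ := sup_fixed_chain K' hK'closed hK'0 hK'add hK'reg
    D hDclosed F hFdemi C hCD hCfix hCne hchain' a
    (fun c hc => (coneLe_neg_iff K _ _).2 (ha c hc)) b
    (fun c hc => (coneLe_neg_iff K _ _).2 (hb c hc))
  refine ⟨s, h1, h2, fun c hc => (coneLe_neg_iff K _ _).1 (h3 c hc), fun a' ha' => ?_⟩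
  exact (coneLe_neg_iff K _ _).1 (h4 a' (fun c hc => (coneLe_neg_iff K _ _).2 (ha' c hc)))
end inf

section iter
variable {X : Type*} [NormedAddCommGroup X] [NormedSpace ℝ X] [CompleteSpace X] (K : Set X)

lemma coneLe_antisymm (hKpointed : ∀ x ∈ K, -x ∈ K → x = 0) {a b : X}
    (h1 : coneLe K a b) (h2 : coneLe K b a) : a = b := by
  have : b - a = 0 := hKpointed _ h1 (by simpa [neg_sub, coneLe] using h2)
  have := sub_eq_zero.1 this
  exact this.symm

lemma exists_fixed_above (hKclosed : IsClosed K) (hK0 : (0:X) ∈ K)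
    (hKadd : ∀ x ∈ K, ∀ y ∈ K, x + y ∈ K)
    (hreg : ∀ u : ℕ → X, (∀ n, coneLe K (u n) (u (n + 1))) →
      (∃ b, ∀ n, coneLe K (u n) b) → ∃ p, Tendsto u atTop (nhds p))
    (D : Set X) (hDclosed : IsClosed D)
    (hDbiInd : ∀ C ⊆ D, C.Nonempty → IsChain (coneLe K) C →
      (∃ b ∈ D, ∀ c ∈ C, coneLe K c b) ∧ (∃ a ∈ D, ∀ c ∈ C, coneLe K a c))
    (F : X → X) (hFmaps : ∀ x ∈ D, F x ∈ D)
    (hFinc : ∀ x ∈ D, ∀ y ∈ D, coneLe K x y → coneLe K (F x) (F y))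
    (hFdemi : ∀ (u : ℕ → X), (∀ n, u n ∈ D) → ∀ p ∈ D,
      Tendsto u atTop (nhds p) →
      ∀ f : X →L[ℝ] ℝ, Tendsto (fun n => f (F (u n))) atTop (nhds (f (F p))))
    (x₀ : X) (hx₀ : x₀ ∈ D) (h₀ : coneLe K x₀ (F x₀)) :
    ∃ p ∈ D, F p = p := by
  set u : ℕ → X := fun n => F^[n] x₀ with hu
  have huD : ∀ n, u n ∈ D := by
    intro n
    induction n with
    | zero => exact hx₀
    | succ n ih => rw [hu]; simp only [Function.iterate_succ_apply']; exact hFmaps _ ih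
  have hustep : ∀ n, coneLe K (u n) (u (n + 1)) := by
    intro n
    induction n with
    | zero => simpa [hu] using h₀
    | succ n ih =>
      have e1 : u (n + 1) = F (u n) := by rw [hu]; simp [Function.iterate_succ_apply']
      have e2 : u (n + 2) = F (u (n + 1)) := by rw [hu]; simp [Function.iterate_succ_apply']
      rw [e1, e2]
      exact hFinc _ (huD n) _ (huD (n + 1)) ih
  have humono : ∀ m n : ℕ, m ≤ n → coneLe K (u m) (u n) := by
    intro m n hmn
    induction n, hmn using Nat.le_induction with
    | base => exact coneLe_refl K hK0 _
    | succ n hmn ih => exact coneLe_trans K hKadd ih (hustep n)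
  have hchain : IsChain (coneLe K) (Set.range u) := by
    rintro _ ⟨m, rfl⟩ _ ⟨n, rfl⟩ _
    rcases le_total m n with h | h
    · exact Or.inl (humono m n h)
    · exact Or.inr (humono n m h)
  obtain ⟨⟨b, _, hb⟩, -⟩ := hDbiInd (Set.range u)
    (by rintro _ ⟨n, rfl⟩; exact huD n) ⟨u 0, ⟨0, rfl⟩⟩ hchain
  obtain ⟨p, hpl⟩ := hreg u hustep ⟨b, fun n => hb _ ⟨n, rfl⟩⟩
  have hpD : p ∈ D := hDclosed.mem_of_tendsto hpl (Filter.Eventually.of_forall huD)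
  refine ⟨p, hpD, ?_⟩
  rw [NormedSpace.eq_iff_forall_dual_eq ℝ]
  intro f
  have h1 : Tendsto (fun n => f (F (u n))) atTop (nhds (f (F p))) :=
    hFdemi u huD p hpD hpl f
  have h2 : Tendsto (fun n => f (u (n + 1))) atTop (nhds (f p)) :=
    ((f.continuous.tendsto p).comp hpl).comp (tendsto_add_atTop_nat 1)
  have h3 : Tendsto (fun n => f (F (u n))) atTop (nhds (f p)) := by
    refine h2.congr fun n => ?_
    rw [hu]; simp [Function.iterate_succ_apply']
  exact tendsto_nhds_unique h1 h3
end iter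

/-- Theorem 4.1 (b), (b'): in a regular partially ordered Banach space, for an
≼-increasing demi-continuous mapping `F : D → D` on a nonempty closed bi-inductive set
`D`, with a point `x₀ ∈ D` such that `x₀ ≼ F x₀`, the fixed point set `𝔉(F)` is a
nonempty bi-chain-complete subset of `D`, and `F` has both a maximal and a minimal
fixed point. -/
theorem demicontinuous_fixed_points_biChainComplete_of_regular
    {X : Type*} [NormedAddCommGroup X] [NormedSpace ℝ X] [CompleteSpace X]
    (K : Set X) (hKclosed : IsClosed K) (hK0 : (0 : X) ∈ K)
    (hKadd : ∀ x ∈ K, ∀ y ∈ K, x + y ∈ K)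
    (hKsmul : ∀ c : ℝ, 0 ≤ c → ∀ x ∈ K, c • x ∈ K)
    (hKpointed : ∀ x ∈ K, -x ∈ K → x = 0)
    -- regularity: every ≼-increasing ≼-upper-bounded sequence converges in norm
    (hreg : ∀ u : ℕ → X, (∀ n, coneLe K (u n) (u (n + 1))) →
      (∃ b, ∀ n, coneLe K (u n) b) → ∃ p, Filter.Tendsto u Filter.atTop (nhds p))
    -- D is a nonempty closed bi-inductive subset of X
    (D : Set X) (hDne : D.Nonempty) (hDclosed : IsClosed D)
    (hDbiInd : ∀ C ⊆ D, C.Nonempty → IsChain (coneLe K) C →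
      (∃ b ∈ D, ∀ c ∈ C, coneLe K c b) ∧ (∃ a ∈ D, ∀ c ∈ C, coneLe K a c))
    -- F maps D into D and is ≼-increasing
    (F : X → X) (hFmaps : ∀ x ∈ D, F x ∈ D)
    (hFinc : ∀ x ∈ D, ∀ y ∈ D, coneLe K x y → coneLe K (F x) (F y))
    -- F is demi-continuous: norm convergence is sent to weak convergence
    (hFdemi : ∀ (u : ℕ → X), (∀ n, u n ∈ D) → ∀ p ∈ D,
      Filter.Tendsto u Filter.atTop (nhds p) →
      ∀ f : X →L[ℝ] ℝ, Filter.Tendsto (fun n => f (F (u n))) Filter.atTop (nhds (f (F p))))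
    -- starting point
    (x₀ : X) (hx₀ : x₀ ∈ D) (h₀ : coneLe K x₀ (F x₀)) :
    ({x | x ∈ D ∧ F x = x}).Nonempty ∧
    (∀ C ⊆ {x | x ∈ D ∧ F x = x}, C.Nonempty → IsChain (coneLe K) C →
      (∃ b, ∀ c ∈ C, coneLe K c b) → (∃ a, ∀ c ∈ C, coneLe K a c) →
      (∃ s, s ∈ {x | x ∈ D ∧ F x = x} ∧ (∀ c ∈ C, coneLe K c s) ∧
        ∀ b, (∀ c ∈ C, coneLe K c b) → coneLe K s b) ∧
      (∃ i, i ∈ {x | x ∈ D ∧ F x = x} ∧ (∀ c ∈ C, coneLe K i c) ∧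
        ∀ a, (∀ c ∈ C, coneLe K a c) → coneLe K a i)) ∧
    (∃ m, m ∈ {x | x ∈ D ∧ F x = x} ∧
      ∀ y ∈ {x | x ∈ D ∧ F x = x}, coneLe K m y → m = y) ∧
    (∃ m', m' ∈ {x | x ∈ D ∧ F x = x} ∧
      ∀ y ∈ {x | x ∈ D ∧ F x = x}, coneLe K y m' → m' = y) := by
  obtain ⟨p₀, hp₀D, hp₀fix⟩ := exists_fixed_above K hKclosed hK0 hKadd hreg D hDclosed
    hDbiInd F hFmaps hFinc hFdemi x₀ hx₀ h₀
  have hFixNe : ({x | x ∈ D ∧ F x = x}).Nonempty := ⟨p₀, hp₀D, hp₀fix⟩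
  -- bi-chain-completeness
  have hbcc : ∀ C ⊆ {x | x ∈ D ∧ F x = x}, C.Nonempty → IsChain (coneLe K) C →
      (∃ b, ∀ c ∈ C, coneLe K c b) → (∃ a, ∀ c ∈ C, coneLe K a c) →
      (∃ s, s ∈ {x | x ∈ D ∧ F x = x} ∧ (∀ c ∈ C, coneLe K c s) ∧
        ∀ b, (∀ c ∈ C, coneLe K c b) → coneLe K s b) ∧
      (∃ i, i ∈ {x | x ∈ D ∧ F x = x} ∧ (∀ c ∈ C, coneLe K i c) ∧
        ∀ a, (∀ c ∈ C, coneLe K a c) → coneLe K a i) := by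
    intro C hC hCne hchain ⟨b, hb⟩ ⟨a, ha⟩
    have hCD : C ⊆ D := fun c hc => (hC hc).1
    have hCfix : ∀ c ∈ C, F c = c := fun c hc => (hC hc).2
    constructor
    · obtain ⟨s, h1, h2, h3, h4⟩ := sup_fixed_chain K hKclosed hK0 hKadd hreg D hDclosed
        F hFdemi C hCD hCfix hCne hchain b hb a ha
      exact ⟨s, ⟨h1, h2⟩, h3, h4⟩
    · obtain ⟨s, h1, h2, h3, h4⟩ := inf_fixed_chain K hKclosed hK0 hKadd hreg D hDclosed
        F hFdemi C hCD hCfix hCne hchain b hb a ha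
      exact ⟨s, ⟨h1, h2⟩, h3, h4⟩
  refine ⟨hFixNe, hbcc, ?_, ?_⟩
  -- maximal fixed point via Zorn
  · let S := {x // x ∈ D ∧ F x = x}
    haveI : Nonempty S := ⟨⟨p₀, hp₀D, hp₀fix⟩⟩
    have hbound : ∀ c : Set S, IsChain (fun s t : S => coneLe K s.1 t.1) c → c.Nonempty →
        ∃ ub : S, ∀ t ∈ c, coneLe K t.1 ub.1 := by
      intro c hc hcne
      set C' : Set X := Subtype.val '' c with hC'
      have hC'ne : C'.Nonempty := hcne.image _
      have hC'sub : C' ⊆ {x | x ∈ D ∧ F x = x} := by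
        rintro _ ⟨s, hs, rfl⟩; exact s.2
      have hC'chain : IsChain (coneLe K) C' := by
        rintro _ ⟨s, hs, rfl⟩ _ ⟨t, ht, rfl⟩ hne
        have hst : s ≠ t := fun h => hne (by rw [h])
        exact hc hs ht hst
      obtain ⟨⟨b, _, hb⟩, ⟨a, _, ha⟩⟩ := hDbiInd C' (fun x hx => (hC'sub hx).1) hC'ne hC'chain
      obtain ⟨s, h1, h2, h3, _⟩ := sup_fixed_chain K hKclosed hK0 hKadd hreg D hDclosed
        F hFdemi C' (fun x hx => (hC'sub hx).1) (fun x hx => (hC'sub hx).2)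
        hC'ne hC'chain b hb a ha
      exact ⟨⟨s, h1, h2⟩, fun t ht => h3 t.1 ⟨t, ht, rfl⟩⟩
    obtain ⟨m, hm⟩ := exists_maximal_of_nonempty_chains_bounded
      (r := fun s t : S => coneLe K s.1 t.1)
      (fun c hc hcne => hbound c hc hcne) (fun h1 h2 => coneLe_trans K hKadd h1 h2)
    refine ⟨m.1, ⟨m.2.1, m.2.2⟩, fun y hy hle => ?_⟩
    exact coneLe_antisymm K hKpointed hle (hm ⟨y, hy⟩ hle)
  -- minimal fixed point via Zorn (flipped order)
  · let S := {x // x ∈ D ∧ F x = x}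
    haveI : Nonempty S := ⟨⟨p₀, hp₀D, hp₀fix⟩⟩
    have hbound : ∀ c : Set S, IsChain (fun s t : S => coneLe K t.1 s.1) c → c.Nonempty →
        ∃ ub : S, ∀ t ∈ c, coneLe K ub.1 t.1 := by
      intro c hc hcne
      set C' : Set X := Subtype.val '' c with hC'
      have hC'ne : C'.Nonempty := hcne.image _
      have hC'sub : C' ⊆ {x | x ∈ D ∧ F x = x} := by
        rintro _ ⟨s, hs, rfl⟩; exact s.2
      have hC'chain : IsChain (coneLe K) C' := by
        rintro _ ⟨s, hs, rfl⟩ _ ⟨t, ht, rfl⟩ hne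
        have hst : s ≠ t := fun h => hne (by rw [h])
        rcases hc hs ht hst with h | h
        · exact Or.inr h
        · exact Or.inl h
      obtain ⟨⟨b, _, hb⟩, ⟨a, _, ha⟩⟩ := hDbiInd C' (fun x hx => (hC'sub hx).1) hC'ne hC'chain
      obtain ⟨s, h1, h2, h3, _⟩ := inf_fixed_chain K hKclosed hK0 hKadd hreg D hDclosed
        F hFdemi C' (fun x hx => (hC'sub hx).1) (fun x hx => (hC'sub hx).2)
        hC'ne hC'chain b hb a ha
      exact ⟨⟨s, h1, h2⟩, fun t ht => h3 t.1 ⟨t, ht, rfl⟩⟩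
    obtain ⟨m, hm⟩ := exists_maximal_of_nonempty_chains_bounded
      (r := fun s t : S => coneLe K t.1 s.1)
      (fun c hc hcne => hbound c hc hcne) (fun h1 h2 => coneLe_trans K hKadd h2 h1)
    refine ⟨m.1, ⟨m.2.1, m.2.2⟩, fun y hy hle => ?_⟩
    exact coneLe_antisymm K hKpointed (hm ⟨y, hy⟩ hle) hle
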